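/- arXiv:2403.10526 — 2 statements merged into one kernel-verified Lean document; each statement's English description precedes it below -/
import Mathlib

section
/- Let A be a von Neumann algebra on H and P, Q projections in A. Then I−P is invertible up to the pair (Q, P) in A if and only if H is the (not necessarily orthogonal) direct sum of (I−Q)(H) and P(H), i.e., (I−Q)(H) ∩ P(H) = {0} and (I−Q)(H) + P(H) = H. -/
variable {H : Type*} [NormedAddCommGroup H] [InnerProductSpace ℂ H] [CompleteSpace H]

/-- `p` is a projection: self-adjoint idempotent. -/
def IsProjE {R : Type*} [Ring R] [StarRing R] (p : R) : Prop := p * p = p ∧ star p = p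

/-- `a` is invertible up to the pair of projections `(p, q)`, with witness in `S`. -/
def InvUpToIn {R : Type*} [Ring R] [StarRing R] (S : Set R) (a p q : R) : Prop :=
  ∃ b ∈ S, b = (1 - p) * b * (1 - q) ∧ (1 - q) * a * (1 - p) * b = 1 - q ∧
    b * ((1 - q) * a * (1 - p)) = 1 - p

private lemma mem_range_idem_iff {e : H →L[ℂ] H} (he : e * e = e) {x : H} :
    x ∈ LinearMap.range (e : H →ₗ[ℂ] H) ↔ e x = x := by
  constructor
  · rintro ⟨y, rfl⟩
    have h := ContinuousLinearMap.ext_iff.mp he y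
    simpa [ContinuousLinearMap.mul_apply] using h
  · intro h
    exact ⟨x, h⟩

private lemma isClosed_range_idem {e : H →L[ℂ] H} (he : e * e = e) :
    IsClosed ((LinearMap.range (e : H →ₗ[ℂ] H) : Submodule ℂ H) : Set H) := by
  have hker : (LinearMap.range (e : H →ₗ[ℂ] H) : Submodule ℂ H) = LinearMap.ker ((1 - e : H →L[ℂ] H) : H →ₗ[ℂ] H) := by
    ext x
    simp only [mem_range_idem_iff he, LinearMap.mem_ker, ContinuousLinearMap.sub_apply,
      ContinuousLinearMap.one_apply, sub_eq_zero, ContinuousLinearMap.coe_coe]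
    exact eq_comm
  rw [hker]
  exact ContinuousLinearMap.isClosed_ker (1 - e)

/-- `I - P` is invertible up to `(Q, P)` iff `H = (I-Q)(H) ∔ P(H)`. -/
theorem one_sub_proj_invUpTo_iff_direct_sum (A : VonNeumannAlgebra H)
    (P Q : H →L[ℂ] H) (hP : IsProjE P) (hPA : P ∈ A) (hQ : IsProjE Q) (hQA : Q ∈ A) :
    InvUpToIn (A : Set (H →L[ℂ] H)) (1 - P) Q P ↔
      (LinearMap.range ((1 - Q : H →L[ℂ] H) : H →ₗ[ℂ] H) ⊓ LinearMap.range (P : H →ₗ[ℂ] H) = ⊥ ∧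
        LinearMap.range ((1 - Q : H →L[ℂ] H) : H →ₗ[ℂ] H) ⊔ LinearMap.range (P : H →ₗ[ℂ] H) = ⊤) := by
  obtain ⟨hP1, -⟩ := hP
  obtain ⟨hQ1, -⟩ := hQ
  have h1P : (1 - P) * (1 - P) = 1 - P := by
    rw [sub_mul, mul_sub, mul_sub, hP1, one_mul, mul_one, one_mul]
    abel
  have h1Q : (1 - Q) * (1 - Q) = 1 - Q := by
    rw [sub_mul, mul_sub, mul_sub, hQ1, one_mul, mul_one, one_mul]
    abel
  constructor
  · rintro ⟨b, hbA, hb1, hb2, hb3⟩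
    -- simplify hb2, hb3 using h1P
    have hb2' : (1 - P) * ((1 - Q) * b) = 1 - P := by
      have := hb2
      rw [show ((1 : H →L[ℂ] H) - P) * (1 - P) * (1 - Q) * b
            = (1 - P) * ((1 - Q) * b) from by rw [h1P, mul_assoc]] at this
      exact this
    have hb3' : b * ((1 - P) * (1 - Q)) = 1 - Q := by
      have := hb3
      rw [show ((1 : H →L[ℂ] H) - P) * (1 - P) * (1 - Q) = (1 - P) * (1 - Q) from by
        rw [h1P]] at this
      exact this
    constructor
    · rw [eq_bot_iff]
      rintro x ⟨hxR, hxK⟩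
      have hx1 : (1 - Q) x = x := (mem_range_idem_iff h1Q).mp hxR
      have hx2 : P x = x := (mem_range_idem_iff hP1).mp hxK
      have h := ContinuousLinearMap.ext_iff.mp hb3' x
      simp only [ContinuousLinearMap.mul_apply, hx1, ContinuousLinearMap.sub_apply,
        ContinuousLinearMap.one_apply, hx2, sub_self, map_zero] at h
      simpa [Submodule.mem_bot] using h.symm
    · rw [eq_top_iff]
      intro x _
      have h := ContinuousLinearMap.ext_iff.mp hb2' x
      simp only [ContinuousLinearMap.mul_apply, ContinuousLinearMap.sub_apply,
        ContinuousLinearMap.one_apply] at h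
      -- h : (1-Q)(b x) - P ((1-Q)(b x)) = x - P x
      have key : (1 - Q) (b x) - P ((1 - Q) (b x)) = x - P x := by
        simpa [ContinuousLinearMap.sub_apply, ContinuousLinearMap.one_apply] using h
      refine Submodule.mem_sup.mpr ⟨(1 - Q) (b x), ⟨b x, rfl⟩,
        P (x - (1 - Q) (b x)), ⟨x - (1 - Q) (b x), rfl⟩, ?_⟩
      rw [map_sub, ← add_sub_assoc, sub_eq_sub_iff_add_eq_add.mp key, add_sub_cancel_right]
  · rintro ⟨hinf, hsup⟩
    have hcompl : IsCompl (LinearMap.range ((1 - Q : H →L[ℂ] H) : H →ₗ[ℂ] H) : Submodule ℂ H) (LinearMap.range (P : H →ₗ[ℂ] H)) :=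
      ⟨disjoint_iff.mpr hinf, codisjoint_iff.mpr hsup⟩
    have hRc := isClosed_range_idem h1Q
    have hKc := isClosed_range_idem hP1
    set R : Submodule ℂ H := LinearMap.range ((1 - Q : H →L[ℂ] H) : H →ₗ[ℂ] H) with hR
    set K : Submodule ℂ H := LinearMap.range (P : H →ₗ[ℂ] H) with hK
    let E : H →L[ℂ] H := R.subtypeL.comp (R.linearProjOfClosedCompl K hcompl hRc hKc)
    have hER : ∀ x, E x ∈ R := fun x => Submodule.coe_mem _
    have hEl : ∀ x ∈ R, E x = x := fun x hx => by
      simp only [E, ContinuousLinearMap.comp_apply, Submodule.coe_subtypeL',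
        Submodule.coe_continuous_linearProjOfClosedCompl']
      exact congrArg Subtype.val (Submodule.linearProjOfIsCompl_apply_left hcompl ⟨x, hx⟩)
    have hEr : ∀ x ∈ K, E x = 0 := fun x hx => by
      simp only [E, ContinuousLinearMap.comp_apply, Submodule.coe_subtypeL',
        Submodule.coe_continuous_linearProjOfClosedCompl']
      rw [Submodule.projectionOnto_apply_of_mem_right hcompl hx]
      rfl
    have hEK : ∀ x, x - E x ∈ K := by
      intro x
      obtain ⟨r, hr, k, hk, hrk⟩ := Submodule.mem_sup.mp (hsup ▸ Submodule.mem_top (x := x))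
      have : E x = r := by
        rw [← hrk, map_add, hEl r hr, hEr k hk, add_zero]
      rw [this, ← hrk, add_sub_cancel_left]
      exact hk
    have hfixR : ∀ x ∈ R, (1 - Q) x = x := fun x hx => (mem_range_idem_iff h1Q).mp hx
    have hfixK : ∀ x ∈ K, P x = x := fun x hx => (mem_range_idem_iff hP1).mp hx
    refine ⟨E, ?_, ?_, ?_, ?_⟩
    · -- E ∈ A via double commutant
      rw [← A.centralizer_centralizer, Set.mem_centralizer_iff]
      intro T hT
      have hTP : P * T = T * P := (Set.mem_centralizer_iff.mp hT) P hPA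
      have hTQ : Q * T = T * Q := (Set.mem_centralizer_iff.mp hT) Q hQA
      ext x
      simp only [ContinuousLinearMap.mul_apply]
      -- goal : T (E x) = E (T x)
      have hTR : T (E x) ∈ R := by
        rw [mem_range_idem_iff h1Q]
        have h1 : (1 - Q) (E x) = E x := hfixR _ (hER x)
        calc (1 - Q) (T (E x)) = ((1 - Q) * T) (E x) := rfl
          _ = (T * (1 - Q)) (E x) := by
              rw [show ((1 : H →L[ℂ] H) - Q) * T = T * (1 - Q) from by
                rw [sub_mul, mul_sub, one_mul, mul_one, hTQ]]
          _ = T ((1 - Q) (E x)) := rfl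
          _ = T (E x) := by rw [h1]
      have hTK : T (x - E x) ∈ K := by
        rw [mem_range_idem_iff hP1]
        have h1 : P (x - E x) = x - E x := hfixK _ (hEK x)
        calc P (T (x - E x)) = (P * T) (x - E x) := rfl
          _ = (T * P) (x - E x) := by rw [hTP]
          _ = T (P (x - E x)) := rfl
          _ = T (x - E x) := by rw [h1]
      have hTx : T x = T (E x) + T (x - E x) := by
        rw [← map_add, add_sub_cancel]
      rw [hTx, map_add, hEl _ hTR, hEr _ hTK, add_zero]
    · -- E = (1-Q) * E * (1-P)
      ext x
      simp only [ContinuousLinearMap.mul_apply]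
      have h1 : E ((1 - P) x) = E x := by
        have : (1 - P) x = x - P x := rfl
        rw [this, map_sub, hEr (P x) ⟨x, rfl⟩, sub_zero]
      rw [h1, hfixR _ (hER x)]
    · -- (1-P)*(1-P)*(1-Q)*E = 1-P
      rw [show ((1 : H →L[ℂ] H) - P) * (1 - P) * (1 - Q) * E = (1 - P) * ((1 - Q) * E) from by
        rw [h1P, mul_assoc]]
      ext x
      simp only [ContinuousLinearMap.mul_apply]
      rw [hfixR _ (hER x)]
      -- goal: (1-P) (E x) = (1-P) x
      have h0 : (1 - P) (x - E x) = 0 := by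
        have : P (x - E x) = x - E x := hfixK _ (hEK x)
        simp [ContinuousLinearMap.sub_apply, this, sub_eq_zero]
      have h2 : (1 - P) x - (1 - P) (E x) = 0 := by rw [← map_sub]; exact h0
      exact (sub_eq_zero.mp h2).symm
    · -- E * ((1-P)*(1-P)*(1-Q)) = 1-Q
      rw [show ((1 : H →L[ℂ] H) - P) * (1 - P) * (1 - Q) = (1 - P) * (1 - Q) from by rw [h1P]]
      ext x
      simp only [ContinuousLinearMap.mul_apply]
      have h1 : (1 - P) ((1 - Q) x) = (1 - Q) x - P ((1 - Q) x) := rfl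
      rw [h1, map_sub, hEl ((1 - Q) x) ⟨x, rfl⟩, hEr (P ((1 - Q) x)) ⟨(1 - Q) x, rfl⟩, sub_zero]
end

section
/- Let A be a properly infinite von Neumann algebra on H and T ∈ A an A-Fredholm operator, invertible up to (I−P̃, I−Q̃) where I−P̃ and I−Q̃ are finite projections in A and (I−Q̃)T P̃ = 0. Then T maps P̃(H) isomorphically (bounded bijection) onto Q̃(H); in particular T(P̃(H)) is closed. -/
variable {H : Type*} [NormedAddCommGroup H] [InnerProductSpace ℂ H] [CompleteSpace H]

/-- Murray–von Neumann equivalence of `p` and `q`, witnessed inside the set `S`. -/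
def MvN {R : Type*} [Ring R] [StarRing R] (S : Set R) (p q : R) : Prop :=
  ∃ v ∈ S, v * star v = p ∧ star v * v = q

/-- `p` is a finite projection in `S`. -/
def FiniteProjIn {R : Type*} [Ring R] [StarRing R] (S : Set R) (p : R) : Prop :=
  p ∈ S ∧ IsProjE p ∧
    ∀ q : R, q ∈ S → IsProjE q → q * p = q → p * q = q → MvN S p q → q = p

theorem fredholm_maps_isomorphically (A : VonNeumannAlgebra H)
    -- `A` is properly infinite: the identity is not a finite projection
    (hinf : ¬ FiniteProjIn (A : Set (H →L[ℂ] H)) 1)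
    (T Pt Qt : H →L[ℂ] H) (hT : T ∈ A)
    (hPt : IsProjE Pt) (hPtA : Pt ∈ A) (hQt : IsProjE Qt) (hQtA : Qt ∈ A)
    (hPfin : FiniteProjIn (A : Set (H →L[ℂ] H)) (1 - Pt))
    (hQfin : FiniteProjIn (A : Set (H →L[ℂ] H)) (1 - Qt))
    (hInv : InvUpToIn (A : Set (H →L[ℂ] H)) T (1 - Pt) (1 - Qt))
    (hTri : (1 - Qt) * T * Pt = 0) :
    Set.InjOn T ((LinearMap.range (Pt : H →ₗ[ℂ] H) : Submodule ℂ H) : Set H) ∧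
    T '' ((LinearMap.range (Pt : H →ₗ[ℂ] H) : Submodule ℂ H) : Set H) =
      ((LinearMap.range (Qt : H →ₗ[ℂ] H) : Submodule ℂ H) : Set H) ∧
    IsClosed (T '' ((LinearMap.range (Pt : H →ₗ[ℂ] H) : Submodule ℂ H) : Set H)) := by
  obtain ⟨S, hSA, hS1, hS2, hS3⟩ := hInv
  simp only [sub_sub_cancel] at hS1 hS2 hS3
  -- hS1 : S = Pt * S * Qt, hS2 : Qt * T * Pt * S = Qt, hS3 : S * (Qt * T * Pt) = Pt
  have hTP : Qt * T * Pt = T * Pt := by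
    have h := hTri
    rw [sub_mul, sub_mul, one_mul, sub_eq_zero] at h
    exact h.symm
  have hST : S * (T * Pt) = Pt := by rw [← hTP]; exact hS3
  have hPS : Pt * S = S := by
    conv_lhs => rw [hS1]
    rw [← mul_assoc, ← mul_assoc, hPt.1, ← hS1]
  have hmemP : ∀ x ∈ ((LinearMap.range (Pt : H →ₗ[ℂ] H) : Submodule ℂ H) : Set H), Pt x = x := by
    rintro x ⟨y, rfl⟩
    exact congrFun (congrArg DFunLike.coe hPt.1) y
  have hmemQ : ∀ x, Qt x = x → x ∈ ((LinearMap.range (Qt : H →ₗ[ℂ] H) : Submodule ℂ H) : Set H) := by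
    intro x hx; exact ⟨x, hx⟩
  have hSTx : ∀ x, Pt x = x → S (T x) = x := by
    intro x hx
    have := congrFun (congrArg DFunLike.coe hST) x
    simpa [ContinuousLinearMap.mul_apply, hx] using this
  refine ⟨?_, ?_, ?_⟩
  · intro x hx y hy hxy
    have hx' := hmemP x hx
    have hy' := hmemP y hy
    rw [← hSTx x hx', ← hSTx y hy', hxy]
  · ext y
    constructor
    · rintro ⟨x, hx, rfl⟩
      have hx' := hmemP x hx
      apply hmemQ
      have := congrFun (congrArg DFunLike.coe hTP) x
      simpa [ContinuousLinearMap.mul_apply, hx'] using this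
    · rintro ⟨z, rfl⟩
      refine ⟨S (Qt z), ⟨S (Qt z), ?_⟩, ?_⟩
      · exact congrFun (congrArg DFunLike.coe hPS) (Qt z)
      · have h1 : T * Pt * S = Qt := by rw [← hTP]; exact hS2
        have h2 := congrFun (congrArg DFunLike.coe h1) (Qt z)
        have h3 : Pt (S (Qt z)) = S (Qt z) :=
          congrFun (congrArg DFunLike.coe hPS) (Qt z)
        have h4 := congrFun (congrArg DFunLike.coe hQt.1) z
        simp only [ContinuousLinearMap.mul_apply] at h2 h4
        rw [h3] at h2
        rw [h2, h4]; rfl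
  · have himg : T '' ((LinearMap.range (Pt : H →ₗ[ℂ] H) : Submodule ℂ H) : Set H) =
        ((LinearMap.range (Qt : H →ₗ[ℂ] H) : Submodule ℂ H) : Set H) := by
      ext y
      constructor
      · rintro ⟨x, hx, rfl⟩
        have hx' := hmemP x hx
        apply hmemQ
        have := congrFun (congrArg DFunLike.coe hTP) x
        simpa [ContinuousLinearMap.mul_apply, hx'] using this
      · rintro ⟨z, rfl⟩
        refine ⟨S (Qt z), ⟨S (Qt z), ?_⟩, ?_⟩
        · exact congrFun (congrArg DFunLike.coe hPS) (Qt z)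
        · have h1 : T * Pt * S = Qt := by rw [← hTP]; exact hS2
          have h2 := congrFun (congrArg DFunLike.coe h1) (Qt z)
          have h3 : Pt (S (Qt z)) = S (Qt z) :=
            congrFun (congrArg DFunLike.coe hPS) (Qt z)
          have h4 := congrFun (congrArg DFunLike.coe hQt.1) z
          simp only [ContinuousLinearMap.mul_apply] at h2 h4
          rw [h3] at h2
          rw [h2, h4]; rfl
    rw [himg]
    have hset : ((LinearMap.range (Qt : H →ₗ[ℂ] H) : Submodule ℂ H) : Set H) = {y | Qt y = y} := by
      ext y
      constructor
      · rintro ⟨z, rfl⟩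
        exact congrFun (congrArg DFunLike.coe hQt.1) z
      · intro h; exact ⟨y, h⟩
    rw [hset]
    exact isClosed_eq Qt.continuous continuous_id
end
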